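/- The row language of DC₁ saturates D^Row: every word w ∈ D^Row occurs as a row of some picture in DC₁. Specifically, for every w ∈ D^Row of length n there exist Dyck words w₁, w₂, w₃ ∈ D^Row of length n such that the picture with rows w₁, w₂, w, w₃ (in this order) belongs to DC₁. -/

import Mathlib

/-- The alphabet Δ₁ = {a, b, c, d}. -/
inductive Del : Type
  | a | b | c | d
deriving DecidableEq

/-- Row cancellation: pairs [a,b] and [c,d]. -/
def rowStep (w w' : List Del) : Prop :=
  ∃ (u v : List Del),
    (w = u ++ [Del.a, Del.b] ++ v ∨ w = u ++ [Del.c, Del.d] ++ v) ∧ w' = u ++ v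

/-- The row Dyck language D^Row. -/
def DRow (w : List Del) : Prop := Relation.ReflTransGen rowStep w []

/-- Column cancellation: pairs [a,c] and [b,d]. -/
def colStep (w w' : List Del) : Prop :=
  ∃ (u v : List Del),
    (w = u ++ [Del.a, Del.c] ++ v ∨ w = u ++ [Del.b, Del.d] ++ v) ∧ w' = u ++ v

/-- The column Dyck language D^Col. -/
def DCol (w : List Del) : Prop := Relation.ReflTransGen colStep w []

/-- Row i (of length n) of a picture. -/
def row (p : ℕ → ℕ → Del) (n i : ℕ) : List Del := (List.range n).map (p i)

/-- Column j (of length m) of a picture. -/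
def col (p : ℕ → ℕ → Del) (m j : ℕ) : List Del :=
  (List.range m).map (fun i => p i j)

/-- The Dyck crossword language DC₁: nonempty pictures all of whose rows
are in D^Row and all of whose columns are in D^Col. -/
def DC (m n : ℕ) (p : ℕ → ℕ → Del) : Prop :=
  1 ≤ m ∧ 1 ≤ n ∧ (∀ i < m, DRow (row p n i)) ∧ (∀ j < n, DCol (col p m j))

/-- A letter map is pair-preserving if it sends both row pairs to row pairs. -/
def PairOK (f : Del → Del) : Prop :=
  ((f Del.a = Del.a ∧ f Del.b = Del.b) ∨ (f Del.a = Del.c ∧ f Del.b = Del.d)) ∧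
  ((f Del.c = Del.a ∧ f Del.d = Del.b) ∨ (f Del.c = Del.c ∧ f Del.d = Del.d))

lemma rowStep_map {f : Del → Del} (hf : PairOK f) {w w' : List Del}
    (h : rowStep w w') : rowStep (w.map f) (w'.map f) := by
  obtain ⟨u, v, hmid, rfl⟩ := h
  refine ⟨u.map f, v.map f, ?_, by simp⟩
  rcases hmid with rfl | rfl
  · rcases hf.1 with ⟨h1, h2⟩ | ⟨h1, h2⟩ <;> simp [h1, h2]
  · rcases hf.2 with ⟨h1, h2⟩ | ⟨h1, h2⟩ <;> simp [h1, h2]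

lemma DRow_map {f : Del → Del} (hf : PairOK f) {w : List Del} (h : DRow w) :
    DRow (w.map f) := by
  have := Relation.ReflTransGen.lift (List.map f) (fun a b hab => rowStep_map hf hab) _ _ h
  simpa [Function.onFun, DRow] using this

def f0 : Del → Del
  | Del.a => Del.a | Del.b => Del.b | Del.c => Del.a | Del.d => Del.b

def f1 : Del → Del
  | Del.a => Del.c | Del.b => Del.d | Del.c => Del.a | Del.d => Del.b

def f3 : Del → Del
  | Del.a => Del.c | Del.b => Del.d | Del.c => Del.c | Del.d => Del.d

lemma f0_ok : PairOK f0 := ⟨Or.inl ⟨rfl, rfl⟩, Or.inl ⟨rfl, rfl⟩⟩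
lemma f1_ok : PairOK f1 := ⟨Or.inr ⟨rfl, rfl⟩, Or.inl ⟨rfl, rfl⟩⟩
lemma f3_ok : PairOK f3 := ⟨Or.inr ⟨rfl, rfl⟩, Or.inr ⟨rfl, rfl⟩⟩

lemma colStep_ac (u v : List Del) : colStep (u ++ [Del.a, Del.c] ++ v) (u ++ v) :=
  ⟨u, v, Or.inl rfl, rfl⟩

lemma colStep_bd (u v : List Del) : colStep (u ++ [Del.b, Del.d] ++ v) (u ++ v) :=
  ⟨u, v, Or.inr rfl, rfl⟩

lemma DCol_col (x : Del) : DCol [f0 x, f1 x, x, f3 x] := by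
  cases x
  · -- [a,c,a,c]
    exact Relation.ReflTransGen.head (colStep_ac [] [Del.a, Del.c])
      (Relation.ReflTransGen.single (colStep_ac [] []))
  · -- [b,d,b,d]
    exact Relation.ReflTransGen.head (colStep_bd [] [Del.b, Del.d])
      (Relation.ReflTransGen.single (colStep_bd [] []))
  · -- [a,a,c,c]
    exact Relation.ReflTransGen.head (colStep_ac [Del.a] [Del.c])
      (Relation.ReflTransGen.single (colStep_ac [] []))
  · -- [b,b,d,d]
    exact Relation.ReflTransGen.head (colStep_bd [Del.b] [Del.d])
      (Relation.ReflTransGen.single (colStep_bd [] []))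

lemma range_map_getD (l : List Del) :
    (List.range l.length).map (fun j => l.getD j Del.a) = l := by
  apply List.ext_getElem
  · simp
  · intro i h1 h2
    simp [List.getD_eq_getElem?_getD, List.getElem?_eq_getElem h2]

/-- Every nonempty word of D^Row occurs as a row of a DC₁ picture; in fact
as the third row of a 4-row picture whose other rows are also in D^Row. -/
theorem row_language_saturates_DRow (w : List Del) (hw : DRow w) (hne : w ≠ []) :
    ∃ (w₁ w₂ w₃ : List Del), DRow w₁ ∧ DRow w₂ ∧ DRow w₃ ∧
      w₁.length = w.length ∧ w₂.length = w.length ∧ w₃.length = w.length ∧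
      ∃ p : ℕ → ℕ → Del, DC 4 w.length p ∧
        row p w.length 0 = w₁ ∧ row p w.length 1 = w₂ ∧
        row p w.length 2 = w ∧ row p w.length 3 = w₃ := by
  set n := w.length with hn
  have hn1 : 1 ≤ n := by
    cases w with
    | nil => exact absurd rfl hne
    | cons x l => simp [hn]
  set g : ℕ → Del → Del := fun i => if i = 0 then f0 else if i = 1 then f1
    else if i = 2 then id else f3 with hg
  set p : ℕ → ℕ → Del := fun i j => g i (w.getD j Del.a) with hp
  have hrow : ∀ i, row p n i = w.map (g i) := by
    intro i
    conv_rhs => rw [← range_map_getD w]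
    simp [row, hp, List.map_map, Function.comp, hn]
  have hrow2 : row p n 2 = w := by rw [hrow]; simp [hg]
  refine ⟨w.map f0, w.map f1, w.map f3, DRow_map f0_ok hw, DRow_map f1_ok hw,
    DRow_map f3_ok hw, by simp [hn], by simp [hn], by simp [hn], p, ?_, ?_, ?_, hrow2, ?_⟩
  · refine ⟨by norm_num, hn1, ?_, ?_⟩
    · intro i hi
      interval_cases i
      · rw [hrow]; exact DRow_map f0_ok hw
      · rw [hrow]; exact DRow_map f1_ok hw
      · rw [hrow2]; exact hw
      · rw [hrow]; exact DRow_map f3_ok hw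
    · intro j hj
      have : col p 4 j = [f0 (w.getD j Del.a), f1 (w.getD j Del.a),
          w.getD j Del.a, f3 (w.getD j Del.a)] := by
        simp [col, hp, hg, List.range_succ]
      rw [this]
      exact DCol_col _
  · rw [hrow]; rfl
  · rw [hrow]; rfl
  · rw [hrow]; rfl
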